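/- arXiv:2010.11118 — 7 statements merged into one kernel-verified Lean document; each statement's English description precedes it below -/
import Mathlib

section
/- For all real x and n > 1/2, the cubic equation λ³ − (x²/4 + n)λ − x/4 = 0 has three distinct real solutions. -/
/-- For all real x and n > 1/2, the cubic λ³ − (x²/4 + n)λ − x/4 = 0 has
three distinct real solutions. -/
theorem cubic_three_distinct_roots (x n : ℝ) (hn : n > 1/2) :
    ∃ a b c : ℝ, a < b ∧ b < c ∧
      a^3 - (x^2/4 + n)*a - x/4 = 0 ∧
      b^3 - (x^2/4 + n)*b - x/4 = 0 ∧
      c^3 - (x^2/4 + n)*c - x/4 = 0 := by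
  set p : ℝ := x^2/4 + n with hp
  have hp0 : 0 < p := by positivity
  set s : ℝ := Real.sqrt (p/3) with hs
  have hs2 : s^2 = p/3 := Real.sq_sqrt (by positivity)
  have hs0 : 0 < s := Real.sqrt_pos.mpr (by positivity)
  set f : ℝ → ℝ := fun t => t^3 - p*t - x/4 with hf
  have hfc : Continuous f := by rw [hf]; fun_prop
  clear_value p s f
  -- key inequality: 64 p^3 > 27 x^2
  have hkey : (2*p*s/3)^2 > (x/4)^2 := by
    have h1 : (2*p*s/3)^2 = 4*p^3/27 := by
      have : (2*p*s/3)^2 = 4*p^2*s^2/9 := by ring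
      rw [this, hs2]; ring
    rw [h1]
    have h2 : 64*p^3 > 27*x^2 := by
      rw [hp]
      nlinarith [sq_nonneg (x^2-1), sq_nonneg x, sq_nonneg (x*(x^2-1)), hn,
        sq_nonneg (n - 1/2), mul_nonneg (sub_pos.mpr hn).le (sq_nonneg x),
        mul_nonneg (mul_nonneg (sub_pos.mpr hn).le (sub_pos.mpr hn).le) (sq_nonneg x)]
    have h3 : (x/4)^2 = x^2/16 := by ring
    linarith
  have hps : 2*p*s/3 > |x/4| := by
    have h0 : 0 < 2*p*s/3 := by positivity
    rcases abs_cases (x/4) with ⟨h,_⟩|⟨h,_⟩ <;> nlinarith [abs_nonneg (x/4)]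
  have hfs : f s < 0 := by
    have : f s = -(2*p*s/3) - x/4 := by
      simp only [hf]
      have : s^3 = s * (p/3) := by rw [← hs2]; ring
      rw [this]; ring
    rw [this]
    have := neg_abs_le (x/4)
    nlinarith
  have hfns : f (-s) > 0 := by
    have : f (-s) = (2*p*s/3) - x/4 := by
      simp only [hf]
      have : s^3 = s * (p/3) := by rw [← hs2]; ring
      nlinarith [this]
    rw [this]
    have := le_abs_self (x/4)
    nlinarith
  set M : ℝ := s + p + |x|/4 + 1 with hM
  clear_value M
  have hM1 : 1 ≤ M := by
    have := abs_nonneg x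
    rw [hM]; linarith
  have hMs : s < M := by
    have := abs_nonneg x
    rw [hM]; linarith
  have hax : x/4 ≤ |x|/4 := by
    have := le_abs_self x; linarith
  have hax' : -(|x|/4) ≤ x/4 := by
    have := neg_abs_le x; linarith
  have hMp : M - p = s + |x|/4 + 1 := by rw [hM]; ring
  have h4 : M^2 - p ≥ |x|/4 + 1 := by nlinarith [hs0, sq_nonneg (M-1)]
  have h5 : M*(M^2-p) ≥ |x|/4 + 1 := by nlinarith [h4, hM1, abs_nonneg x]
  have h6 : M^3 - p*M = M*(M^2-p) := by ring
  have hfM : 0 < f M := by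
    simp only [hf]
    linarith [h5, hax, h6]
  have hfnM : f (-M) < 0 := by
    simp only [hf]
    have h7 : (-M)^3 - p*(-M) = -(M*(M^2-p)) := by ring
    linarith [h5, hax', h7]
  -- three roots by IVT
  have ivt1 : (0:ℝ) ∈ f '' Set.Icc (-M) (-s) := by
    apply intermediate_value_Icc (by linarith) hfc.continuousOn
    exact ⟨le_of_lt hfnM, le_of_lt hfns⟩
  have ivt2 : (0:ℝ) ∈ f '' Set.Icc (-s) s := by
    apply intermediate_value_Icc' (by linarith) hfc.continuousOn
    exact ⟨le_of_lt hfs, le_of_lt hfns⟩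
  have ivt3 : (0:ℝ) ∈ f '' Set.Icc s M := by
    apply intermediate_value_Icc (by linarith) hfc.continuousOn
    exact ⟨le_of_lt hfs, le_of_lt hfM⟩
  obtain ⟨a, ⟨ha1, ha2⟩, hfa⟩ := ivt1
  obtain ⟨b, ⟨hb1, hb2⟩, hfb⟩ := ivt2
  obtain ⟨c, ⟨hc1, hc2⟩, hfc'⟩ := ivt3
  have hans : a ≠ -s := by rintro rfl; rw [hfa] at hfns; exact lt_irrefl 0 hfns
  have hbs : b ≠ s := by rintro rfl; rw [hfb] at hfs; exact lt_irrefl 0 hfs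
  refine ⟨a, b, c, ?_, ?_, ?_, ?_, ?_⟩
  · exact lt_of_lt_of_le (lt_of_le_of_ne ha2 hans) hb1
  · exact lt_of_lt_of_le (lt_of_le_of_ne hb2 hbs) hc1
  · simp only [hf] at hfa; exact hfa
  · simp only [hf] at hfb; exact hfb
  · simp only [hf] at hfc'; exact hfc'
end

section
/- For all real x and n > 1/2, the cubic equation λ³ − (x²/4 + n)λ − x/4 = 0 has exactly one root λ with λ > |x|/2, and this root is positive. -/
/-- For all real x and n > 1/2, the cubic λ³ − (x²/4 + n)λ − x/4 = 0 has
exactly one root λ with λ > |x|/2, and this root is positive. -/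

theorem cubic_unique_root_above (x n : ℝ) (hn : n > 1/2) :
    ∃! lam : ℝ, lam^3 - (x^2/4 + n)*lam - x/4 = 0 ∧ |x|/2 < lam ∧ 0 < lam := by
  have hn0 : (0:ℝ) < n := by linarith
  have hex : ∃ lam : ℝ, lam^3 - (x^2/4 + n)*lam - x/4 = 0 ∧ |x|/2 < lam ∧ 0 < lam := by
    by_cases hx : x = 0
    · refine ⟨Real.sqrt n, ?_, ?_, ?_⟩
      · have h1 : Real.sqrt n ^ 2 = n := Real.sq_sqrt hn0.le
        subst hx
        nlinarith [Real.sqrt_nonneg n]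
      · subst hx; simpa using Real.sqrt_pos.2 hn0
      · exact Real.sqrt_pos.2 hn0
    · set f : ℝ → ℝ := fun l => l^3 - (x^2/4 + n)*l - x/4 with hf
      have hxpos : 0 < |x| := abs_pos.2 hx
      have hax : x ≤ |x| := le_abs_self x
      have hax' : -x ≤ |x| := neg_le_abs x
      have hsq : |x|^2 = x^2 := sq_abs x
      set M : ℝ := Real.sqrt (x^2/4 + n + |x| + 1) with hM
      have hM0 : 0 ≤ M := Real.sqrt_nonneg _
      have hM2 : M^2 = x^2/4 + n + |x| + 1 := Real.sq_sqrt (by positivity)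
      have hMgt : |x|/2 < M := by nlinarith [sq_nonneg (M + |x|/2)]
      have hfc : f (|x|/2) < 0 := by
        show (|x|/2)^3 - (x^2/4 + n)*(|x|/2) - x/4 < 0
        nlinarith [mul_pos hxpos hxpos]
      have hfM : 0 ≤ f M := by
        show 0 ≤ M^3 - (x^2/4 + n)*M - x/4
        nlinarith [mul_nonneg hM0 (abs_nonneg x)]
      have hcont : ContinuousOn f (Set.Icc (|x|/2) M) := by
        apply Continuous.continuousOn; fun_prop
      have hsub := intermediate_value_Icc hMgt.le hcont
      have h0mem : (0:ℝ) ∈ Set.Icc (f (|x|/2)) (f M) := ⟨hfc.le, hfM⟩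
      obtain ⟨lam, hlmem, hlval⟩ := hsub h0mem
      have hne : lam ≠ |x|/2 := by
        intro h; rw [h] at hlval; rw [hlval] at hfc; exact lt_irrefl 0 hfc
      have hgt : |x|/2 < lam := lt_of_le_of_ne hlmem.1 (Ne.symm hne)
      exact ⟨lam, hlval, hgt, lt_of_le_of_lt (by positivity) hgt⟩
  obtain ⟨a, ha⟩ := hex
  refine ⟨a, ha, ?_⟩
  rintro b ⟨hb1, hb2, hb3⟩
  obtain ⟨ha1, ha2, ha3⟩ := ha
  by_contra hne
  have hne' : b - a ≠ 0 := fun h => hne (by linarith [sub_eq_zero.1 h])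
  have hfac : (b - a) * (b^2 + b*a + a^2 - (x^2/4 + n)) = 0 := by
    linear_combination hb1 - ha1
  have hsum : b^2 + b*a + a^2 = x^2/4 + n := by
    rcases mul_eq_zero.1 hfac with h | h
    · exact absurd h hne'
    · linarith
  have hprod : a*b*(a+b) = -x/4 := by linear_combination a*hsum - ha1
  have hxneg : x < 0 := by nlinarith [mul_pos (mul_pos ha3 hb3) (by linarith : (0:ℝ) < a + b)]
  have habs : |x| = -x := abs_of_neg hxneg
  rw [habs] at ha2 hb2
  -- so a > -x/2, b > -x/2, and a*b*(a+b) = -x/4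
  have h2 : 2*a*(a+b) < 1 := by
    have hb' : b * (2*a*(a+b)) < b * 1 := by nlinarith
    exact lt_of_mul_lt_mul_left hb' hb3.le
  have h1 : 2*b*(a+b) < 1 := by
    have ha' : a * (2*b*(a+b)) < a * 1 := by nlinarith
    exact lt_of_mul_lt_mul_left ha' ha3.le
  -- key identity: 4(a+b)²(n - 1/2) = -(1-u)(1-v)(u+v+uv), u=2a(a+b), v=2b(a+b)
  have hs : 0 < a + b := by linarith
  nlinarith [mul_pos (mul_pos (sub_pos.2 h2) (sub_pos.2 h1))
      (by positivity : (0:ℝ) < 2*a*(a+b) + 2*b*(a+b) + (2*a*(a+b))*(2*b*(a+b))),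
    sq_nonneg (a+b), mul_pos hs hs, hsum, hprod, sq_nonneg (a-b)]
end

section
/- For n > 1/2, the function w(x) = λ⁺(x)² − x²/4 is strictly increasing in x, where λ⁺(x) is the largest real root of λ³ − (x²/4 + n)λ − x/4 = 0. More precisely, w'(x) = (1/2)·(λ⁺(x)² − x²/4) / (λ⁺(x)·(3λ⁺(x)² − x²/4 − n)) > 0. -/
/-- For n > 1/2, the function w(x) = λ⁺(x)² − x²/4 is strictly increasing,
where λ⁺(x) is the largest real root of λ³ − (x²/4 + n)λ − x/4 = 0; moreover
w'(x) = (1/2)·(λ⁺(x)² − x²/4)/(λ⁺(x)·(3λ⁺(x)² − x²/4 − n)) > 0. -/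
theorem w_strict_mono (n : ℝ) (hn : n > 1/2) (lam : ℝ → ℝ)
    (hroot : ∀ x : ℝ, (lam x)^3 - (x^2/4 + n)*(lam x) - x/4 = 0)
    (hmax : ∀ x μ : ℝ, μ^3 - (x^2/4 + n)*μ - x/4 = 0 → μ ≤ lam x)
    (hdiff : Differentiable ℝ lam) :
    StrictMono (fun x : ℝ => (lam x)^2 - x^2/4) ∧
    ∀ x : ℝ,
      deriv (fun x : ℝ => (lam x)^2 - x^2/4) x
        = (1/2) * ((lam x)^2 - x^2/4) / (lam x * (3*(lam x)^2 - x^2/4 - n)) ∧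
      0 < deriv (fun x : ℝ => (lam x)^2 - x^2/4) x := by
  have hn0 : (0:ℝ) < n := by linarith
  -- Step 1: lam x > |x|/2
  have key : ∀ x : ℝ, |x|/2 < lam x := by
    intro x
    rcases eq_or_ne x 0 with hx | hx
    · subst hx
      have hs : Real.sqrt n ^ 2 = n := Real.sq_sqrt hn0.le
      have hroot0 : (Real.sqrt n)^3 - ((0:ℝ)^2/4 + n)*(Real.sqrt n) - 0/4 = 0 := by
        linear_combination Real.sqrt n * hs
      have h := hmax 0 _ hroot0
      have h2 : 0 < Real.sqrt n := Real.sqrt_pos.mpr hn0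
      simpa using lt_of_lt_of_le h2 h
    · have hx0 : 0 < |x| := abs_pos.mpr hx
      have hxx : (0:ℝ) ≤ |x| := abs_nonneg x
      set p := x^2/4 + n with hp_def
      set a0 := |x|/2 with ha0_def
      set b0 := |x|/2 + p + |x|/4 + 1 with hb0_def
      clear_value p a0 b0
      have hp : 0 < p := by rw [hp_def]; positivity
      have hab : a0 ≤ b0 := by rw [ha0_def, hb0_def]; linarith [hp, hxx]
      have hcont : ContinuousOn (fun t : ℝ => t^3 - p*t - x/4) (Set.Icc a0 b0) := by
        fun_prop
      have hga : a0^3 - p*a0 - x/4 < 0 := by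
        rw [ha0_def, hp_def]
        nlinarith [sq_abs x, neg_abs_le x,
          mul_pos hx0 (show (0:ℝ) < n - 1/2 by linarith)]
      have hgb : 0 ≤ b0^3 - p*b0 - x/4 := by
        have hb1 : (1:ℝ) ≤ b0 := by rw [hb0_def]; linarith [hp, hxx]
        have hbp : p + 1 + |x|/4 ≤ b0 := by rw [hb0_def]; linarith [hxx]
        have hb0n : (0:ℝ) ≤ b0 := by linarith
        have e1 : b0^2 ≤ b0^3 := by
          nlinarith [mul_nonneg (sq_nonneg b0) (show (0:ℝ) ≤ b0 - 1 by linarith)]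
        have e2 : (p + 1 + |x|/4)*b0 ≤ b0*b0 := mul_le_mul_of_nonneg_right hbp hb0n
        nlinarith [le_abs_self x, e1, e2, mul_le_mul_of_nonneg_left hb1 hp.le]
      have h0mem : (0:ℝ) ∈ Set.Icc (a0^3 - p*a0 - x/4) (b0^3 - p*b0 - x/4) :=
        ⟨hga.le, hgb⟩
      obtain ⟨μ, hμmem, hμ⟩ := intermediate_value_Icc hab hcont h0mem
      have hμroot : μ^3 - (x^2/4 + n)*μ - x/4 = 0 := by
        rw [← hp_def]; exact hμ
      have hle := hmax x μ hμroot
      have hne : μ ≠ a0 := by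
        intro h; rw [h] at hμ; exact absurd hμ (ne_of_lt hga)
      have : a0 < μ := lt_of_le_of_ne hμmem.1 (Ne.symm hne)
      rw [ha0_def] at this
      linarith
  have hpos : ∀ x : ℝ, 0 < lam x := by
    intro x
    have h1 := key x
    have h2 : (0:ℝ) ≤ |x|/2 := by positivity
    linarith
  have hw : ∀ x : ℝ, 0 < (lam x)^2 - x^2/4 := by
    intro x
    have h1 := key x
    nlinarith [abs_nonneg x, sq_abs x]
  have hD : ∀ x : ℝ, 0 < 3*(lam x)^2 - x^2/4 - n := by
    intro x
    have h1 := hroot x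
    have hxa : |x| < 2*(lam x) := by have := key x; linarith
    have hx1 : x < 2*(lam x) := lt_of_le_of_lt (le_abs_self x) hxa
    have hx2 : -x < 2*(lam x) := by linarith [neg_abs_le x]
    have ha0 : 0 < lam x := hpos x
    set a := lam x with ha_def
    have h8 : 0 < 8*a^3 + x := by
      by_contra hc
      push_neg at hc
      have ha2 : 4*a^2 < 1 := by nlinarith
      have hxpa : 0 < x + 2*a := by linarith
      have hH : 4*a^3 - x^2*a - x > 2*a := by
        have := mul_lt_mul_of_pos_right (show (1:ℝ)/2 < n by linarith) ha0
        nlinarith [h1]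
      have hQ : (x + 2*a)*(a*x + 1 - 2*a^2) < 0 := by nlinarith [hH]
      have hfac : a*x + 1 - 2*a^2 < 0 := by
        by_contra hf
        push_neg at hf
        nlinarith [mul_nonneg hxpa.le hf]
      nlinarith [mul_pos ha0 hxpa]
    have hprod : a * (3*a^2 - x^2/4 - n) = (8*a^3 + x)/4 := by
      linear_combination h1
    nlinarith [hprod, ha0, h8]
  -- derivative facts
  have main : ∀ x : ℝ,
      deriv (fun x : ℝ => (lam x)^2 - x^2/4) x
        = (1/2) * ((lam x)^2 - x^2/4) / (lam x * (3*(lam x)^2 - x^2/4 - n)) ∧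
      0 < deriv (fun x : ℝ => (lam x)^2 - x^2/4) x := by
    intro x
    have ha0 := hpos x
    have hDx := hD x
    have hwx := hw x
    have hlam : HasDerivAt lam (deriv lam x) x := (hdiff x).hasDerivAt
    set L := deriv lam x with hL_def
    have h1 : HasDerivAt (fun y => (lam y)^3) (3*(lam x)^2*L) x := by
      simpa [mul_comm, mul_assoc, mul_left_comm] using hlam.fun_pow 3
    have h2 : HasDerivAt (fun y : ℝ => y^2/4 + n) (x/2) x := by
      have := ((hasDerivAt_pow 2 x).div_const 4).add_const n
      simpa using this.congr_deriv (by ring)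
    have h3 := h2.mul hlam
    have h4 : HasDerivAt (fun y : ℝ => y/4) (1/4) x := by
      simpa using (hasDerivAt_id x).div_const 4
    have hF : HasDerivAt (fun y => (lam y)^3 - (y^2/4 + n)*(lam y) - y/4)
        (3*(lam x)^2*L - (x/2*(lam x) + (x^2/4+n)*L) - 1/4) x := (h1.sub h3).sub h4
    have hzero : (fun y => (lam y)^3 - (y^2/4 + n)*(lam y) - y/4) = fun _ : ℝ => (0:ℝ) :=
      funext hroot
    rw [hzero] at hF
    have hE : 3*(lam x)^2*L - (x/2*(lam x) + (x^2/4+n)*L) - 1/4 = 0 :=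
      (hF.unique (hasDerivAt_const x 0))
    have hwd : HasDerivAt (fun y => (lam y)^2 - y^2/4) (2*(lam x)*L - x/2) x := by
      have ha : HasDerivAt (fun y => (lam y)^2) (2*(lam x)*L) x := by
        simpa [mul_comm, mul_assoc, mul_left_comm] using hlam.fun_pow 2
      have hb : HasDerivAt (fun y : ℝ => y^2/4) (x/2) x := by
        have := (hasDerivAt_pow 2 x).div_const 4
        simpa using this.congr_deriv (by ring)
      exact ha.sub hb
    have hwd' : deriv (fun y : ℝ => (lam y)^2 - y^2/4) x = 2*(lam x)*L - x/2 := hwd.deriv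
    have hDne : 3*(lam x)^2 - x^2/4 - n ≠ 0 := ne_of_gt hDx
    have hane : lam x ≠ 0 := ne_of_gt ha0
    have heq : 2*(lam x)*L - x/2
        = (1/2) * ((lam x)^2 - x^2/4) / (lam x * (3*(lam x)^2 - x^2/4 - n)) := by
      rw [eq_div_iff (mul_ne_zero hane hDne)]
      linear_combination (2*(lam x)^2) * hE - (x/2) * hroot x
    refine ⟨by rw [hwd', heq], ?_⟩
    rw [hwd', heq]
    exact div_pos (by linarith) (mul_pos ha0 hDx)
  exact ⟨strictMono_of_deriv_pos (fun x => (main x).2), main⟩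
end

section
/- Let n > 1/2 and let y : ℝ → ℝ be a C¹ solution of y'(x) = y(x)² − x·y(x) − (n − 1/2) such that for all sufficiently large x, y(x) > 0 and y'(x) > 0. Then for all real x, y'(x) > 0 and y(x) > (x + √(x² + 4n − 2))/2. -/
open Real Filter Set Topology

/-- Riccati comparison: if y solves y' = y² − xy − (n − 1/2) with n > 1/2 and
y is positive with positive derivative for all large x, then y' > 0 everywhere
and y(x) > (x + √(x² + 4n − 2))/2 for all real x. -/
theorem riccati_bound (n : ℝ) (hn : n > 1/2) (y : ℝ → ℝ)
    (hy : ContDiff ℝ 1 y)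
    (hode : ∀ x : ℝ, deriv y x = (y x)^2 - x * y x - (n - 1/2))
    (hlarge : ∃ X : ℝ, ∀ x ≥ X, 0 < y x ∧ 0 < deriv y x) :
    ∀ x : ℝ, 0 < deriv y x ∧ y x > (x + Real.sqrt (x^2 + 4*n - 2))/2 := by
  obtain ⟨X, hX⟩ := hlarge
  set s : ℝ → ℝ := fun x => Real.sqrt (x^2 + 4*n - 2) with hs_def
  set lam : ℝ → ℝ := fun x => (x + s x)/2 with hlam_def
  set lamm : ℝ → ℝ := fun x => (x - s x)/2 with hlamm_def
  have hpos : ∀ x : ℝ, 0 < x^2 + 4*n - 2 := fun x => by nlinarith [sq_nonneg x]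
  have hs_sq : ∀ x, (s x)^2 = x^2 + 4*n - 2 := fun x => Real.sq_sqrt (hpos x).le
  have hs_pos : ∀ x, 0 < s x := fun x => Real.sqrt_pos.mpr (hpos x)
  have hs_gt : ∀ x, x < s x := by
    intro x; nlinarith [hs_sq x, hs_pos x]
  have hs_gt' : ∀ x, -x < s x := by
    intro x; nlinarith [hs_sq x, hs_pos x]
  have hfact : ∀ x, deriv y x = (y x - lam x) * (y x - lamm x) := by
    intro x
    rw [hode x]
    simp only [hlam_def, hlamm_def]
    linear_combination (1/4 : ℝ) * hs_sq x
  have hlamm_neg : ∀ x, lamm x < 0 := by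
    intro x; simp only [hlamm_def]; have := hs_gt x; linarith
  -- continuity
  have hs_cont : Continuous s := by
    apply Real.continuous_sqrt.comp; continuity
  have hlam_cont : Continuous lam := by
    simp only [hlam_def]; exact (continuous_id.add hs_cont).div_const 2
  have hy_cont : Continuous y := hy.continuous
  have hy_diff : Differentiable ℝ y := hy.differentiable one_ne_zero
  -- derivative of lam
  have hlamD : ∀ x : ℝ, HasDerivAt lam ((1 + 1/(2*s x)*(2*x))/2) x := by
    intro x
    have h1 : HasDerivAt (fun z : ℝ => z^2 + 4*n - 2) (2*x) x := by
      have h := ((hasDerivAt_pow 2 x).add_const (4*n)).sub_const 2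
      simpa using h
    have h2 : HasDerivAt (fun z : ℝ => Real.sqrt (z^2 + 4*n - 2))
        (1/(2 * Real.sqrt (x^2 + 4*n - 2)) * (2*x)) x :=
      (Real.hasDerivAt_sqrt (hpos x).ne').comp x h1
    have h3 : HasDerivAt (fun z : ℝ => (z + Real.sqrt (z^2 + 4*n - 2))/2)
        ((1 + 1/(2 * Real.sqrt (x^2 + 4*n - 2))*(2*x))/2) x :=
      ((hasDerivAt_id x).add h2).div_const 2
    exact h3
  have hlamD_pos : ∀ x : ℝ, 0 < (1 + 1/(2*s x)*(2*x))/2 := by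
    intro x
    have h1 := hs_pos x
    have h2 := hs_gt' x
    have h3 : 1/(2*s x)*(2*x) = x / s x := by field_simp
    rw [h3]
    have h4 : (0:ℝ) < (s x + x) / s x := div_pos (by linarith) h1
    have h5 : (s x + x) / s x = 1 + x / s x := by field_simp
    linarith [h5 ▸ h4]
  -- Step 1: for x ≥ X, y x > lam x
  have hstep1 : ∀ x ≥ X, lam x < y x := by
    intro x hx
    obtain ⟨hy0, hy'0⟩ := hX x hx
    have hprod : 0 < (y x - lam x) * (y x - lamm x) := (hfact x) ▸ hy'0
    have h2 : 0 < y x - lamm x := by have := hlamm_neg x; linarith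
    nlinarith
  -- Main claim: y > lam everywhere
  have hmain : ∀ x : ℝ, lam x < y x := by
    by_contra h
    push_neg at h
    obtain ⟨x₀, hx₀⟩ := h
    have hSne : ({x | y x ≤ lam x} : Set ℝ).Nonempty := ⟨x₀, hx₀⟩
    have hSbdd : BddAbove ({x | y x ≤ lam x} : Set ℝ) := by
      refine ⟨X, fun z hz => ?_⟩
      by_contra hzX
      push_neg at hzX
      exact absurd (hstep1 z hzX.le) (not_lt.mpr hz)
    have hSclosed : IsClosed ({x | y x ≤ lam x} : Set ℝ) := isClosed_le hy_cont hlam_cont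
    set x₁ : ℝ := sSup {x | y x ≤ lam x} with hx₁_def
    have hx₁S : y x₁ ≤ lam x₁ := hSclosed.csSup_mem hSne hSbdd
    have hgt : ∀ z, x₁ < z → lam z < y z := by
      intro z hz
      by_contra hzle
      push_neg at hzle
      exact absurd (le_csSup hSbdd hzle) (not_le.mpr hz)
    -- y x₁ = lam x₁ by continuity from the right
    have heq : y x₁ = lam x₁ := by
      refine le_antisymm hx₁S ?_
      have htend : Tendsto (fun z => y z - lam z) (𝓝[>] x₁) (𝓝 (y x₁ - lam x₁)) :=
        ((hy_cont.tendsto x₁).sub (hlam_cont.tendsto x₁)).mono_left nhdsWithin_le_nhds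
      have hev : ∀ᶠ z in 𝓝[>] x₁, 0 ≤ y z - lam z :=
        eventually_mem_nhdsWithin.mono (fun z hz => le_of_lt (sub_pos.mpr (hgt z hz)))
      have := ge_of_tendsto htend hev
      linarith
    -- derivative of g = y - lam at x₁ is negative
    have hder0 : deriv y x₁ = 0 := by
      rw [hfact x₁, heq]; ring
    have hg : HasDerivAt (fun z => y z - lam z) (0 - (1 + 1/(2*s x₁)*(2*x₁))/2) x₁ := by
      have := ((hy_diff x₁).hasDerivAt).sub (hlamD x₁)
      rwa [hder0] at this
    have hgneg : (0 - (1 + 1/(2*s x₁)*(2*x₁))/2) < 0 := by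
      have := hlamD_pos x₁; linarith
    -- slope argument
    have hslope : Tendsto (slope (fun z => y z - lam z) x₁) (𝓝[≠] x₁)
        (𝓝 (0 - (1 + 1/(2*s x₁)*(2*x₁))/2)) :=
      hasDerivAt_iff_tendsto_slope.mp hg
    have hslope' : Tendsto (slope (fun z => y z - lam z) x₁) (𝓝[>] x₁)
        (𝓝 (0 - (1 + 1/(2*s x₁)*(2*x₁))/2)) :=
      hslope.mono_left (nhdsWithin_mono x₁ (fun z hz => ne_of_gt hz))
    have hevneg : ∀ᶠ z in 𝓝[>] x₁, slope (fun z => y z - lam z) x₁ z < 0 :=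
      hslope'.eventually_lt_const hgneg
    obtain ⟨z, hz1, hz2⟩ := (hevneg.and eventually_mem_nhdsWithin).exists
    have hzgt : x₁ < z := hz2
    have hgz : 0 < y z - lam z := sub_pos.mpr (hgt z hzgt)
    have : slope (fun z => y z - lam z) x₁ z =
        ((y z - lam z) - (y x₁ - lam x₁)) / (z - x₁) := by
      simp [slope_def_field]
    rw [this, heq] at hz1
    have hden : 0 < z - x₁ := by linarith
    have : ((y z - lam z) - (lam x₁ - lam x₁)) / (z - x₁) > 0 := by
      apply div_pos _ hden
      simp
      linarith
    linarith
  -- conclusion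
  intro x
  have h1 := hmain x
  have h2 : lamm x < y x := lt_trans (by have := hs_pos x; simp only [hlam_def, hlamm_def]; linarith) h1
  constructor
  · rw [hfact x]
    exact mul_pos (sub_pos.mpr h1) (sub_pos.mpr h2)
  · simpa [hlam_def, hs_def] using h1
end

section
/- Let n > 1/2 and let Φ(x) = U(n−1, x)/U(n, x) where U is the parabolic cylinder function. Then for all real x, Φ(x) > (x + √(x² + 4n − 2))/2 and Φ'(x) > 0. -/
open Filter Set

/-- Lower bound for Φ_n(x) = U(n−1,x)/U(n,x). The parabolic cylinder function
U is characterized by the difference-differential system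
U'(m,x) = (x/2)U(m,x) − U(m−1,x),
U'(m−1,x) = −(x/2)U(m−1,x) − (m−1/2)U(m,x),
together with U(n,·) nonvanishing and Φ positive and increasing as x → +∞.
Then for all real x, Φ(x) > (x + √(x² + 4n − 2))/2 and Φ'(x) > 0. -/
theorem pcf_ratio_lower_bound (n : ℝ) (hn : n > 1/2) (U : ℝ → ℝ → ℝ)
    (hD1 : ∀ m x : ℝ, HasDerivAt (U m) (x/2 * U m x - U (m-1) x) x)
    (hD2 : ∀ m x : ℝ, HasDerivAt (U (m-1)) (-(x/2) * U (m-1) x - (m - 1/2) * U m x) x)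
    (hU : ∀ x : ℝ, U n x ≠ 0)
    (hasymp : ∀ᶠ x in atTop,
      0 < U (n-1) x / U n x ∧ 0 < deriv (fun t => U (n-1) t / U n t) x) :
    ∀ x : ℝ, U (n-1) x / U n x > (x + Real.sqrt (x^2 + 4*n - 2))/2 ∧
      0 < deriv (fun t => U (n-1) t / U n t) x := by
  set Φ : ℝ → ℝ := fun t => U (n-1) t / U n t with hΦdef
  have hq : ∀ x : ℝ, (0:ℝ) < x^2 + 4*n - 2 := fun x => by nlinarith [sq_nonneg x]
  set s : ℝ → ℝ := fun x => Real.sqrt (x^2 + 4*n - 2) with hsdef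
  have hs_sq : ∀ x, s x ^ 2 = x^2 + 4*n - 2 := fun x => Real.sq_sqrt (hq x).le
  have hs_pos : ∀ x, 0 < s x := fun x => Real.sqrt_pos.mpr (hq x)
  have hs_gt : ∀ x, |x| < s x := by
    intro x
    nlinarith [hs_sq x, hs_pos x, abs_nonneg x, sq_abs x]
  set r : ℝ → ℝ := fun x => (x + s x)/2 with hrdef
  have hr_root : ∀ x, r x ^ 2 - x * r x - (n - 1/2) = 0 := by
    intro x
    have h := hs_sq x
    simp only [hrdef]
    nlinarith [h]
  -- derivative of Φ : Riccati equation
  have hΦ' : ∀ x, HasDerivAt Φ (Φ x ^ 2 - x * Φ x - (n - 1/2)) x := by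
    intro x
    have h := (hD2 n x).div (hD1 n x) (hU x)
    have hUx := hU x
    have heq : Φ x ^ 2 - x * Φ x - (n - 1/2) =
        ((-(x/2) * U (n-1) x - (n - 1/2) * U n x) * U n x
          - U (n-1) x * (x/2 * U n x - U (n-1) x)) / U n x ^ 2 := by
      rw [eq_div_iff (pow_ne_zero 2 hUx)]
      simp only [hΦdef]
      field_simp
      ring
    rw [heq]
    exact h
  -- derivative of r
  have hr' : ∀ x, HasDerivAt r ((1 + x / s x)/2) x := by
    intro x
    have h1 : HasDerivAt (fun y : ℝ => y^2 + 4*n - 2) (2*x) x := by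
      simpa using ((hasDerivAt_pow 2 x).add_const (4*n)).sub_const 2
    have h2 : HasDerivAt (fun y : ℝ => Real.sqrt (y^2 + 4*n - 2)) (2*x / (2 * s x)) x :=
      h1.sqrt (hq x).ne'
    have h3 : HasDerivAt (fun y : ℝ => (y + Real.sqrt (y^2 + 4*n - 2))/2)
        ((1 + 2*x / (2 * s x))/2) x := ((hasDerivAt_id x).add h2).div_const 2
    have hsne := (hs_pos x).ne'
    convert h3 using 1
    field_simp
  have hr'pos : ∀ x, 0 < (1 + x / s x)/2 := by
    intro x
    have h1 := (abs_lt.mp (hs_gt x)).1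
    have h2 := hs_pos x
    have : -1 < x / s x := by
      rw [lt_div_iff₀ h2]; linarith
    linarith
  have h2r : ∀ x, 2 * r x - x = s x := by
    intro x; simp only [hrdef]; ring
  have hxr : ∀ x, x - r x < 0 := by
    intro x
    have h1 := (abs_lt.mp (hs_gt x)).2
    simp only [hrdef]
    linarith
  -- if Φ > r then Φ' > 0
  have key : ∀ x, r x < Φ x → 0 < Φ x ^ 2 - x * Φ x - (n - 1/2) := by
    intro x hx
    have h1 := hr_root x
    have h2 := h2r x
    have h3 := hs_pos x
    nlinarith [mul_pos (sub_pos.mpr hx) (by linarith : (0:ℝ) < Φ x - (x - r x))]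
  -- eventually Φ > r
  have hev : ∀ᶠ x in atTop, r x < Φ x := by
    filter_upwards [hasymp] with x hx
    obtain ⟨hpos, hder⟩ := hx
    have hpos' : 0 < Φ x := by simpa [hΦdef] using hpos
    rw [(hΦ' x).deriv] at hder
    by_contra hle
    push_neg at hle
    have h1 := hr_root x
    have h2 := hxr x
    nlinarith [mul_nonneg (sub_nonneg.mpr hle) (by nlinarith [hpos', h2] : (0:ℝ) ≤ Φ x - (x - r x))]
  have hΦc : Continuous Φ := continuous_iff_continuousAt.mpr fun x => (hΦ' x).continuousAt
  have hrc : Continuous r := continuous_iff_continuousAt.mpr fun x => (hr' x).continuousAt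
  -- main: Φ > r everywhere
  have main : ∀ x, r x < Φ x := by
    by_contra hcon
    push_neg at hcon
    obtain ⟨x₀, hx₀⟩ := hcon
    obtain ⟨X, hX⟩ := eventually_atTop.mp hev
    set S : Set ℝ := {x | Φ x - r x ≤ 0} with hSdef
    have hSne : S.Nonempty := ⟨x₀, by simp [hSdef]; linarith⟩
    have hSbdd : BddAbove S := by
      refine ⟨X, fun y hy => ?_⟩
      by_contra hlt
      push_neg at hlt
      have := hX y hlt.le
      simp only [hSdef, mem_setOf_eq] at hy
      linarith
    have hSclosed : IsClosed S := isClosed_le (hΦc.sub hrc) continuous_const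
    set x₁ := sSup S with hx₁def
    have hx₁S : x₁ ∈ S := hSclosed.csSup_mem hSne hSbdd
    have hgt : ∀ y, x₁ < y → 0 < Φ y - r y := by
      intro y hy
      by_contra hle
      push_neg at hle
      have : y ≤ x₁ := le_csSup hSbdd (by simpa [hSdef] using hle)
      linarith
    have hge : 0 ≤ Φ x₁ - r x₁ := by
      have ht : Tendsto (fun y => Φ y - r y) (nhdsWithin x₁ (Ioi x₁)) (nhds (Φ x₁ - r x₁)) :=
        ((hΦc.sub hrc).continuousAt).continuousWithinAt.tendsto
      refine ge_of_tendsto ht ?_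
      filter_upwards [self_mem_nhdsWithin] with y hy
      exact (hgt y hy).le
    have heq : Φ x₁ - r x₁ = 0 := le_antisymm hx₁S hge
    have hd : HasDerivAt (fun y => Φ y - r y)
        ((Φ x₁ ^ 2 - x₁ * Φ x₁ - (n - 1/2)) - (1 + x₁ / s x₁)/2) x₁ :=
      (hΦ' x₁).sub (hr' x₁)
    have hroot0 : Φ x₁ ^ 2 - x₁ * Φ x₁ - (n - 1/2) = 0 := by
      have hΦeq : Φ x₁ = r x₁ := by linarith
      rw [hΦeq]; exact hr_root x₁
    have hdneg : (Φ x₁ ^ 2 - x₁ * Φ x₁ - (n - 1/2)) - (1 + x₁ / s x₁)/2 < 0 := by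
      rw [hroot0]; linarith [hr'pos x₁]
    have hslope := hasDerivAt_iff_tendsto_slope.mp hd
    have hmono : nhdsWithin x₁ (Ioi x₁) ≤ nhdsWithin x₁ {x₁}ᶜ :=
      nhdsWithin_mono _ (fun y hy => ne_of_gt hy)
    have hsl : ∀ᶠ y in nhdsWithin x₁ (Ioi x₁),
        slope (fun y => Φ y - r y) x₁ y < 0 :=
      (hslope.mono_left hmono).eventually_lt_const hdneg
    obtain ⟨y, hy1, hy2⟩ := (hsl.and self_mem_nhdsWithin).exists
    rw [slope_def_field] at hy1
    have hy3 : x₁ < y := hy2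
    have hden : (0:ℝ) < y - x₁ := by linarith
    rw [heq, sub_zero] at hy1
    have : Φ y - r y < 0 := by
      have := (div_neg_iff.mp hy1)
      rcases this with ⟨ha, hb⟩ | ⟨ha, hb⟩
      · linarith
      · exact ha
    linarith [hgt y hy3]
  intro x
  have h1 := main x
  have h2 := key x h1
  constructor
  · simpa [hΦdef, hrdef, hsdef] using h1
  · rw [(hΦ' x).deriv]; exact h2
end

section
/- For n > 1/2 and all real x, the function g(x) = (1/2)√(x² + 4n + 2)·[(n + 1/2)·(x + √(x² + 4n − 2))/(x + √(x² + 4n + 2)) − n] − x/4 is strictly negative; indeed g(x) = −(n + 1/2)·(x² + 4n − √(x² + 4n + 2)·√(x² + 4n − 2)) / (2(x + √(x² + 4n + 2))) < 0. -/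
/-- For n > 1/2 the auxiliary function g is strictly negative, with the stated
closed form. -/
theorem g_neg (n : ℝ) (hn : n > 1/2) (x : ℝ) :
    (1/2) * Real.sqrt (x^2 + 4*n + 2) *
        ((n + 1/2) * (x + Real.sqrt (x^2 + 4*n - 2)) / (x + Real.sqrt (x^2 + 4*n + 2)) - n)
      - x/4 < 0 ∧
    (1/2) * Real.sqrt (x^2 + 4*n + 2) *
        ((n + 1/2) * (x + Real.sqrt (x^2 + 4*n - 2)) / (x + Real.sqrt (x^2 + 4*n + 2)) - n)
      - x/4
      = -((n + 1/2) * (x^2 + 4*n - Real.sqrt (x^2 + 4*n + 2) * Real.sqrt (x^2 + 4*n - 2)))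
          / (2 * (x + Real.sqrt (x^2 + 4*n + 2))) := by
  have h2 : (0:ℝ) ≤ x^2 + 4*n + 2 := by nlinarith [sq_nonneg x]
  have h1 : (0:ℝ) ≤ x^2 + 4*n - 2 := by nlinarith [sq_nonneg x]
  set s := Real.sqrt (x^2 + 4*n + 2) with hsdef
  set t := Real.sqrt (x^2 + 4*n - 2) with htdef
  have hs : s^2 = x^2 + 4*n + 2 := Real.sq_sqrt h2
  have ht : t^2 = x^2 + 4*n - 2 := Real.sq_sqrt h1
  have hsnn : 0 ≤ s := Real.sqrt_nonneg _
  have htnn : 0 ≤ t := Real.sqrt_nonneg _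
  have hxs : 0 < x + s := by
    by_contra h
    push_neg at h
    nlinarith
  have hne : s ≠ t := by
    intro h
    rw [h] at hs
    nlinarith
  have hstpos : 0 < (s - t)^2 := by
    have : s - t ≠ 0 := sub_ne_zero.mpr hne
    positivity
  have hst : s * t < x^2 + 4*n := by nlinarith
  have heq : (1/2) * s * ((n + 1/2) * (x + t) / (x + s) - n) - x/4
      = -((n + 1/2) * (x^2 + 4*n - s * t)) / (2 * (x + s)) := by
    field_simp
    linear_combination (-8*n) * hs
  refine ⟨?_, heq⟩
  rw [heq]
  apply div_neg_of_neg_of_pos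
  · nlinarith
  · linarith
end

section
/- For n > 1/2, the lower bound λ⁺(x) for Φ_n(x) − x/2 is sharper than √(x² + 4n − 2)/2 for all real x: λ⁺(x) > (1/2)√(x² + 4n − 2), where λ⁺(x) is the largest real root of λ³ − (x²/4 + n)λ − x/4 = 0. -/
/-- For n > 1/2, the largest real root λ⁺(x) of λ³ − (x²/4 + n)λ − x/4 = 0
satisfies λ⁺(x) > (1/2)√(x² + 4n − 2) for all real x. -/
theorem lam_gt_riccati_bound (n : ℝ) (hn : n > 1/2) (lam : ℝ → ℝ)
    (hroot : ∀ x : ℝ, (lam x)^3 - (x^2/4 + n)*(lam x) - x/4 = 0)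
    (hmax : ∀ x μ : ℝ, μ^3 - (x^2/4 + n)*μ - x/4 = 0 → μ ≤ lam x) :
    ∀ x : ℝ, lam x > (1/2) * Real.sqrt (x^2 + 4*n - 2) := by
  intro x
  set z : ℝ := (1/2) * Real.sqrt (x^2 + 4*n - 2) with hzdef
  have hnn : (0:ℝ) ≤ x^2 + 4*n - 2 := by nlinarith [sq_nonneg x]
  have hz2 : z^2 = (x^2 + 4*n - 2)/4 := by
    rw [hzdef, mul_pow, Real.sq_sqrt hnn]; ring
  have hzpos : 0 ≤ z := by
    rw [hzdef]; positivity
  have habs : |x| < 2*z := by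
    nlinarith [abs_nonneg x, sq_abs x]
  have hxle : -x ≤ |x| := neg_le_abs x
  set f : ℝ → ℝ := fun t => t^3 - (x^2/4 + n)*t - x/4 with hfdef
  have hfz : f z < 0 := by
    have : f z = -z/2 - x/4 := by
      simp only [hfdef]
      nlinarith [hz2, sq_nonneg z]
    rw [this]; nlinarith
  set M : ℝ := max (z+1) (1 + (x^2/4 + n) + |x/4|) with hMdef
  have hM1 : M ≥ z + 1 := le_max_left _ _
  have hM2 : M ≥ 1 + (x^2/4 + n) + |x/4| := le_max_right _ _
  have ha : (0:ℝ) < x^2/4 + n := by nlinarith [sq_nonneg x]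
  have habs2 : -(x/4) ≤ |x/4| := neg_le_abs _
  have hMpos : 1 ≤ M := by
    have := abs_nonneg (x/4); linarith
  have hMnn : (0:ℝ) ≤ M := by linarith
  have h1 : M + |x/4| ≤ M^2 - (x^2/4 + n) := by
    nlinarith [mul_nonneg hMnn (show (0:ℝ) ≤ M - (1 + (x^2/4 + n) + |x/4|) by linarith),
      mul_nonneg ha.le (show (0:ℝ) ≤ M - 1 by linarith),
      mul_nonneg (abs_nonneg (x/4)) (show (0:ℝ) ≤ M - 1 by linarith)]
  have h2 : M * (M + |x/4|) ≤ M * (M^2 - (x^2/4 + n)) :=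
    mul_le_mul_of_nonneg_left h1 hMnn
  have h4 : M^3 - (x^2/4+n)*M = M*(M^2 - (x^2/4+n)) := by ring
  have h6 : M*(M+|x/4|) = M^2 + M*|x/4| := by ring
  have h5 : |x/4| ≤ M*|x/4| := le_mul_of_one_le_left (abs_nonneg (x/4)) hMpos
  have hfM : 0 ≤ f M := by
    simp only [hfdef]
    have := le_abs_self (x/4)
    have := sq_nonneg M
    nlinarith [h2, h4, h6, h5]
  have hcont : ContinuousOn f (Set.Icc z M) := by
    apply Continuous.continuousOn
    simp only [hfdef]
    exact ((continuous_pow 3).sub (continuous_const.mul continuous_id)).sub continuous_const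
  have hzM : z ≤ M := by linarith
  have h0mem : (0:ℝ) ∈ Set.Icc (f z) (f M) := ⟨le_of_lt hfz, hfM⟩
  obtain ⟨c, hcmem, hfc⟩ := intermediate_value_Icc hzM hcont h0mem
  have hne : c ≠ z := by
    intro h; rw [h] at hfc; rw [hfc] at hfz; exact lt_irrefl 0 hfz
  have hcz : z < c := lt_of_le_of_ne hcmem.1 (Ne.symm hne)
  have hcle : c ≤ lam x := hmax x c (by simpa [hfdef] using hfc)
  linarith
end
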